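/- For the cycle graph C_n, the super domination number is ⌈n/2⌉ if n ≡ 0 or 3 (mod 4), and ⌈(n+1)/2⌉ otherwise. -/

import Mathlib

open SimpleGraph Finset
open Fin.CommRing

/-- A super dominating set: a dominating set `S` such that every vertex `u ∉ S`
has a private "super" dominator `v ∈ S` with `N(v) ∩ (V \ S) = {u}`. -/
def IsSuperDominatingSet {V : Type*} (G : SimpleGraph V) (S : Finset V) : Prop :=
  (∀ u ∉ S, ∃ v ∈ S, G.Adj v u) ∧
  (∀ u ∉ S, ∃ v ∈ S, ∀ w, (G.Adj v w ∧ w ∉ S) ↔ w = u)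

/-- The super domination number: minimum size of a super dominating set. -/
noncomputable def superDominationNumber {V : Type*} (G : SimpleGraph V) : ℕ :=
  sInf {n | ∃ S : Finset V, IsSuperDominatingSet G S ∧ S.card = n}


lemma adj_iff' {m : ℕ} {u v : Fin (m+3)} :
    (cycleGraph (m+3)).Adj u v ↔ v = u + 1 ∨ v = u - 1 := by
  rw [cycleGraph_adj (n := m+1) (u := u) (v := v)]
  constructor
  · rintro (h | h)
    · right; rw [← h]; ring
    · left; rw [← h]; ring
  · rintro (rfl | rfl)
    · right; ring
    · left; ring

lemma add_one_val' {m : ℕ} (u : Fin (m+3)) :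
    ((u+1).val = u.val + 1 ∧ u.val + 1 < m+3) ∨ ((u+1).val = 0 ∧ u.val = m+2) := by
  have h := u.isLt
  rcases Nat.lt_or_ge (u.val + 1) (m+3) with h1 | h1
  · left
    refine ⟨?_, h1⟩
    rw [Fin.val_add, Fin.val_one, Nat.mod_eq_of_lt h1]
  · right
    have : u.val = m + 2 := by omega
    constructor
    · rw [Fin.val_add, Fin.val_one, this]
      simp
    · exact this

lemma sub_one_val' {m : ℕ} (u : Fin (m+3)) :
    (u.val ≠ 0 ∧ (u-1).val = u.val - 1) ∨ (u.val = 0 ∧ (u-1).val = m+2) := by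
  rcases eq_or_ne u.val 0 with h | h
  · right
    refine ⟨h, ?_⟩
    have : u = 0 := by ext; simpa using h
    rw [Fin.coe_sub_one, if_pos this]
  · left
    refine ⟨h, ?_⟩
    have : u ≠ 0 := by intro hh; apply h; rw [hh]; rfl
    rw [Fin.coe_sub_one, if_neg this]

lemma count_lemma : ∀ N : ℕ,
    (∑ i ∈ Finset.range N, if i % 4 < 2 then 1 else 0) = 2*(N/4) + min (N%4) 2 := by
  intro N
  induction N with
  | zero => simp
  | succ k ih =>
    rw [Finset.sum_range_succ, ih]
    split_ifs with h <;> omega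

lemma even_card_invol {α : Type*} [DecidableEq α] (g : α → α) :
    ∀ (k : ℕ) (s : Finset α), s.card ≤ k → (∀ a ∈ s, g a ∈ s) →
      (∀ a ∈ s, g (g a) = a) → (∀ a ∈ s, g a ≠ a) → Even s.card := by
  intro k
  induction k with
  | zero =>
    intro s hs _ _ _
    simp [Finset.card_eq_zero.mp (Nat.le_zero.mp hs)]
  | succ k ih =>
    intro s hs hmem hinv hne
    rcases s.eq_empty_or_nonempty with rfl | ⟨a, ha⟩
    · simp
    · set s' := s \ {a, g a} with hs'
      have hga : g a ∈ s := hmem a ha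
      have hane : g a ≠ a := hne a ha
      have hsub : {a, g a} ⊆ s := by
        intro x hx
        rcases Finset.mem_insert.mp hx with rfl | hx
        · exact ha
        · rwa [Finset.mem_singleton.mp hx]
      have hpair : ({a, g a} : Finset α).card = 2 := by
        rw [Finset.card_insert_of_notMem (by simpa using hane.symm), Finset.card_singleton]
      have hcard : s'.card = s.card - 2 := by
        rw [hs', Finset.card_sdiff_of_subset hsub, hpair]
      have h2le : 2 ≤ s.card := by
        calc 2 = ({a, g a} : Finset α).card := hpair.symm
        _ ≤ s.card := Finset.card_le_card hsub
      have hmem' : ∀ b ∈ s', b ∈ s ∧ b ≠ a ∧ b ≠ g a := by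
        intro b hb
        rw [hs', Finset.mem_sdiff, Finset.mem_insert, Finset.mem_singleton] at hb
        tauto
      have hin' : ∀ b ∈ s', g b ∈ s' := by
        intro b hb
        obtain ⟨hbs, hba, hbga⟩ := hmem' b hb
        rw [hs', Finset.mem_sdiff, Finset.mem_insert, Finset.mem_singleton]
        refine ⟨hmem b hbs, ?_⟩
        push_neg
        constructor
        · intro h; apply hbga; rw [← hinv b hbs, h]
        · intro h; apply hba
          have := congrArg g h
          rwa [hinv b hbs, hinv a ha] at this
      have heven := ih s' (by omega) hin'
        (fun b hb => hinv b (hmem' b hb).1) (fun b hb => hne b (hmem' b hb).1)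
      have : s.card = s'.card + 2 := by omega
      rw [this, Nat.even_iff] at *
      omega


lemma upper_bound (m : ℕ) :
    ∃ S : Finset (Fin (m+3)), IsSuperDominatingSet (cycleGraph (m+3)) S ∧
      S.card = 2*((m+3)/4) + min ((m+3)%4) 2 := by
  set S : Finset (Fin (m+3)) := Finset.univ.filter (fun i => i.val % 4 < 2) with hSdef
  have hmemS : ∀ i : Fin (m+3), i ∈ S ↔ i.val % 4 < 2 := by
    intro i; simp [hSdef]
  have h2 : ∀ u ∉ S, ∃ v ∈ S, ∀ w, ((cycleGraph (m+3)).Adj v w ∧ w ∉ S) ↔ w = u := by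
    intro u hu
    rw [hmemS] at hu
    push_neg at hu
    by_cases ha2 : u.val % 4 = 2
    · -- v = u - 1
      have hu0 : u.val ≠ 0 := by omega
      have hv : (u-1).val = u.val - 1 := by
        rcases sub_one_val' u with ⟨_, h⟩ | ⟨h, _⟩
        · exact h
        · omega
      refine ⟨u - 1, (hmemS _).mpr (by omega), ?_⟩
      intro w
      constructor
      · rintro ⟨hadj, hw⟩
        rcases adj_iff'.mp hadj with rfl | rfl
        · show u - 1 + 1 = u; ring
        · exfalso
          apply hw
          rw [hmemS]
          have hv0 : (u-1).val ≠ 0 := by omega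
          have : (u-1-1).val = (u-1).val - 1 := by
            rcases sub_one_val' (u-1) with ⟨_, h⟩ | ⟨h, _⟩
            · exact h
            · omega
          omega
      · rintro rfl
        refine ⟨adj_iff'.mpr (Or.inl (by ring)), ?_⟩
        rw [hmemS]; omega
    · -- u.val % 4 = 3, v = u + 1
      have ha3 : u.val % 4 = 3 := by omega
      have hvS : (u+1).val % 4 < 2 := by
        rcases add_one_val' u with ⟨h, _⟩ | ⟨h, _⟩ <;> omega
      have hv2S : (u+1+1).val % 4 < 2 := by
        rcases add_one_val' u with ⟨h, hlt⟩ | ⟨h, he⟩ <;>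
          rcases add_one_val' (u+1) with ⟨h', hlt'⟩ | ⟨h', he'⟩ <;> omega
      refine ⟨u + 1, (hmemS _).mpr hvS, ?_⟩
      intro w
      constructor
      · rintro ⟨hadj, hw⟩
        rcases adj_iff'.mp hadj with rfl | rfl
        · exfalso; apply hw; rw [hmemS]; exact hv2S
        · show u + 1 - 1 = u; ring
      · rintro rfl
        refine ⟨adj_iff'.mpr (Or.inr (by ring)), ?_⟩
        rw [hmemS]; omega
  refine ⟨S, ⟨?_, h2⟩, ?_⟩
  · intro u hu
    obtain ⟨v, hv, hiff⟩ := h2 u hu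
    exact ⟨v, hv, ((hiff u).mpr rfl).1⟩
  · rw [hSdef, Finset.card_filter]
    rw [Fin.sum_univ_eq_sum_range (fun i => if i % 4 < 2 then 1 else 0) (m+3)]
    exact count_lemma (m+3)


lemma ne_add_one {m : ℕ} (v : Fin (m+3)) : v + 1 ≠ v := by
  intro h
  have h' := congrArg Fin.val h
  rcases add_one_val' v with ⟨ha, hb⟩ | ⟨ha, hb⟩ <;> omega

lemma ne_sub_one {m : ℕ} (v : Fin (m+3)) : v - 1 ≠ v := by
  intro h
  have h' := congrArg Fin.val h
  rcases sub_one_val' v with ⟨ha, hb⟩ | ⟨ha, hb⟩ <;> omega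

lemma add_one_ne_sub_one {m : ℕ} (v : Fin (m+3)) : v + 1 ≠ v - 1 := by
  intro h
  have h' := congrArg Fin.val h
  have hlt := v.isLt
  rcases add_one_val' v with ⟨ha, hb⟩ | ⟨ha, hb⟩ <;>
    rcases sub_one_val' v with ⟨hc, hd⟩ | ⟨hc, hd⟩ <;> omega

lemma lower_bound (m : ℕ) (S : Finset (Fin (m+3)))
    (hS : IsSuperDominatingSet (cycleGraph (m+3)) S) :
    2*((m+3)/4) + min ((m+3)%4) 2 ≤ S.card := by
  obtain ⟨h1, h2⟩ := hS
  classical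
  set f : Fin (m+3) → Fin (m+3) := fun u => if h : u ∉ S then (h2 u h).choose else u with hf
  have hfspec : ∀ u, ∀ hu : u ∉ S, f u ∈ S ∧
      ∀ w, ((cycleGraph (m+3)).Adj (f u) w ∧ w ∉ S) ↔ w = u := by
    intro u hu
    rw [hf]
    simp only [dif_pos hu]
    exact ⟨(h2 u hu).choose_spec.1, (h2 u hu).choose_spec.2⟩
  have hinj : ∀ u ∉ S, ∀ u' ∉ S, f u = f u' → u = u' := by
    intro u hu u' hu' he
    have hu1 := (hfspec u hu).2
    have hu2 := (hfspec u' hu').2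
    have hA : (cycleGraph (m+3)).Adj (f u') u' ∧ u' ∉ S := (hu2 u').mpr rfl
    rw [← he] at hA
    exact ((hu1 u').mp hA).symm
  have hcompl : Sᶜ.card = (m+3) - S.card := by
    rw [Finset.card_compl, Fintype.card_fin]
  have hle : S.card ≤ m+3 := by
    simpa using Finset.card_le_univ S
  have hc1 : (m+3) - S.card ≤ S.card := by
    rw [← hcompl]
    apply Finset.card_le_card_of_injOn f
    · intro u hu
      exact (hfspec u (Finset.mem_compl.mp hu)).1
    · intro u hu u' hu' he
      exact hinj u (Finset.mem_compl.mp (Finset.mem_coe.mp hu)) u'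
        (Finset.mem_compl.mp (Finset.mem_coe.mp hu')) he
  by_cases hmod : (m+3) % 4 = 2
  swap
  · omega
  · have hstep2 : S.card ≠ (m+3)/2 := by
      intro hcardS
      have hcc : S.card ≤ Sᶜ.card := by omega
      have hsurj := Finset.surj_on_of_inj_on_of_card_le (s := Sᶜ) (t := S) (fun a _ => f a)
        (fun a ha => (hfspec a (Finset.mem_compl.mp ha)).1)
        (fun a₁ a₂ ha₁ ha₂ he => hinj a₁ (Finset.mem_compl.mp ha₁) a₂
          (Finset.mem_compl.mp ha₂) he)
        hcc
      have hclaim : ∀ v ∈ S, (v+1 ∈ S ∧ v-1 ∉ S) ∨ (v-1 ∈ S ∧ v+1 ∉ S) := by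
        intro v hv
        obtain ⟨u, hu, he⟩ := hsurj v hv
        have hu' : u ∉ S := Finset.mem_compl.mp hu
        replace he : v = f u := he
        have hiff := (hfspec u hu').2
        rw [← he] at hiff
        have hadj_u : (cycleGraph (m+3)).Adj v u ∧ u ∉ S := (hiff u).mpr rfl
        rcases adj_iff'.mp hadj_u.1 with rfl | rfl
        · -- u = v + 1
          right
          constructor
          · by_contra hns
            have h' : v - 1 = v + 1 := (hiff (v-1)).mp ⟨adj_iff'.mpr (Or.inr rfl), hns⟩
            exact add_one_ne_sub_one v h'.symm
          · exact hadj_u.2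
        · -- u = v - 1
          left
          constructor
          · by_contra hns
            have h' : v + 1 = v - 1 := (hiff (v+1)).mp ⟨adj_iff'.mpr (Or.inl rfl), hns⟩
            exact add_one_ne_sub_one v h'
          · exact hadj_u.2
      set g : Fin (m+3) → Fin (m+3) := fun v => if v + 1 ∈ S then v + 1 else v - 1 with hg
      have gpos : ∀ w : Fin (m+3), w + 1 ∈ S → g w = w + 1 := by
        intro w hw
        simp only [hg]
        rw [if_pos hw]
      have gneg : ∀ w : Fin (m+3), w + 1 ∉ S → g w = w - 1 := by
        intro w hw
        simp only [hg]
        rw [if_neg hw]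
      have hgmem : ∀ v ∈ S, g v ∈ S := by
        intro v hv
        by_cases h : v + 1 ∈ S
        · rw [gpos v h]; exact h
        · rw [gneg v h]
          rcases hclaim v hv with ⟨h1', _⟩ | ⟨h1', _⟩
          · exact absurd h1' h
          · exact h1'
      have hgne : ∀ v ∈ S, g v ≠ v := by
        intro v hv
        by_cases h : v + 1 ∈ S
        · rw [gpos v h]; exact ne_add_one v
        · rw [gneg v h]; exact ne_sub_one v
      have hginv : ∀ v ∈ S, g (g v) = v := by
        intro v hv
        have hv1v : v - 1 + 1 = v := by ring
        have hv2v : v + 1 - 1 = v := by ring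
        by_cases h : v + 1 ∈ S
        · rw [gpos v h]
          have hnext : v + 1 + 1 ∉ S := by
            rcases hclaim (v+1) h with ⟨_, h2'⟩ | ⟨_, h2'⟩
            · rw [hv2v] at h2'
              exact absurd hv h2'
            · exact h2'
          rw [gneg _ hnext, hv2v]
        · rw [gneg v h]
          have hprev : (v - 1) + 1 ∈ S := by rw [hv1v]; exact hv
          rw [gpos _ hprev, hv1v]
      have heven := even_card_invol g S.card S le_rfl hgmem hginv hgne
      rw [Nat.even_iff] at heven
      omega
    omega


/-- For the cycle graph `C n`, `γ_sp(C n) = ⌈n/2⌉` if `n ≡ 0, 3 (mod 4)` and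
`γ_sp(C n) = ⌈(n+1)/2⌉` otherwise. -/
theorem stmt2 (n : ℕ) (hn : 3 ≤ n) :
    ((n % 4 = 0 ∨ n % 4 = 3) →
      superDominationNumber (SimpleGraph.cycleGraph n) = (n + 1) / 2) ∧
    (¬(n % 4 = 0 ∨ n % 4 = 3) →
      superDominationNumber (SimpleGraph.cycleGraph n) = (n + 2) / 2) := by
  obtain ⟨m, rfl⟩ : ∃ m, n = m + 3 := ⟨n - 3, by omega⟩
  have hval : superDominationNumber (SimpleGraph.cycleGraph (m+3))
      = 2*((m+3)/4) + min ((m+3)%4) 2 := by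
    obtain ⟨S, hS, hcard⟩ := upper_bound m
    apply le_antisymm
    · exact Nat.sInf_le ⟨S, hS, hcard⟩
    · refine le_csInf ?_ ?_
      · exact ⟨_, S, hS, hcard⟩
      · rintro b ⟨T, hT, rfl⟩
        exact lower_bound m T hT
  constructor <;> intro h <;> rw [hval] <;> omega
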